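/- Let K be an extremally disconnected compact Hausdorff space and (U_n) a sequence of pairwise disjoint clopen subsets of K. Then the supremum τ = sup_n n·𝟙_{U_n}, taken in the lattice of continuous functions K → [0,∞], satisfies: τ is finite off a nowhere dense set, {τ = n} = U_n for all n ≥ 1 (up to the same identification), and the range of τ is contained in ℕ ∪ {0} ∪ {∞}. -/

import Mathlib

open Set

theorem stmt_9 {K : Type*} [TopologicalSpace K] [CompactSpace K] [T2Space K]
    [ExtremallyDisconnected K]
    (U : ℕ → Set K) (hU : ∀ n, IsClopen (U n))
    (hdisj : Pairwise (Function.onFun Disjoint U))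
    (τ : K → ENNReal) (hτ : Continuous τ)
    (hub : ∀ n : ℕ, ∀ ω : K, Set.indicator (U n) (fun _ => (n : ENNReal)) ω ≤ τ ω)
    (hlub : ∀ σ : K → ENNReal, Continuous σ →
      (∀ n : ℕ, ∀ ω : K, Set.indicator (U n) (fun _ => (n : ENNReal)) ω ≤ σ ω) →
      ∀ ω, τ ω ≤ σ ω) :
    IsNowhereDense {ω : K | τ ω = ⊤} ∧
      (∀ n : ℕ, 1 ≤ n → {ω : K | τ ω = (n : ENNReal)} = U n) ∧
      (∀ ω : K, τ ω = ⊤ ∨ ∃ m : ℕ, τ ω = (m : ENNReal)) := by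
  classical
  set W : ℕ → Set K := fun n => closure (⋃ k, ⋃ (_ : n ≤ k), U k) with hWdef
  have hWopen : ∀ n, IsOpen (W n) := fun n =>
    ExtremallyDisconnected.open_closure _
      (isOpen_iUnion fun k => isOpen_iUnion fun _ => (hU k).2)
  have hWclopen : ∀ n, IsClopen (W n) := fun n => ⟨isClosed_closure, hWopen n⟩
  have hUW : ∀ {n k : ℕ}, n ≤ k → U k ⊆ W n := by
    intro n k hnk
    refine subset_trans ?_ subset_closure
    exact subset_iUnion₂ (s := fun k (_ : n ≤ k) => U k) k hnk
  have hWanti : ∀ n, W (n + 1) ⊆ W n := fun n =>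
    closure_mono (iUnion₂_mono' fun k hk => ⟨k, Nat.le_of_succ_le hk, subset_rfl⟩)
  have hubn : ∀ n (ω : K), ω ∈ U n → (n : ENNReal) ≤ τ ω := fun n ω hω => by
    have := hub n ω
    rwa [Set.indicator_of_mem hω] at this
  -- τ ≥ n on W n
  have hA : ∀ n, ∀ ω ∈ W n, (n : ENNReal) ≤ τ ω := by
    intro n
    have hcl : IsClosed {ω : K | (n : ENNReal) ≤ τ ω} := isClosed_le continuous_const hτ
    have hsub : (⋃ k, ⋃ (_ : n ≤ k), U k) ⊆ {ω : K | (n : ENNReal) ≤ τ ω} := by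
      intro ω hω
      simp only [mem_iUnion] at hω
      obtain ⟨k, hk, hωk⟩ := hω
      exact le_trans (by exact_mod_cast hk) (hubn k ω hωk)
    exact fun ω hω => closure_minimal hsub hcl hω
  -- τ ≤ n off W (n+1)
  have hB : ∀ n (ω : K), ω ∉ W (n + 1) → τ ω ≤ n := by
    intro n ω hω
    set σ : K → ENNReal := (W (n + 1)).piecewise τ (fun x => min (τ x) n) with hσ
    have hσc : Continuous σ := Continuous.piecewise
      (by rw [(hWclopen (n + 1)).frontier_eq]; simp) hτ (hτ.min continuous_const)
    have hσub : ∀ k (x : K), Set.indicator (U k) (fun _ => (k : ENNReal)) x ≤ σ x := by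
      intro k x
      by_cases hx : x ∈ U k
      · rw [Set.indicator_of_mem hx]
        by_cases hxW : x ∈ W (n + 1)
        · rw [hσ, Set.piecewise_eq_of_mem _ _ _ hxW]
          exact hubn k x hx
        · have hkn : k ≤ n := by
            by_contra hkn
            exact hxW (hUW (Nat.succ_le_of_lt (Nat.lt_of_not_le hkn)) hx)
          rw [hσ, Set.piecewise_eq_of_notMem _ _ _ hxW]
          exact le_min (hubn k x hx) (by exact_mod_cast hkn)
      · rw [Set.indicator_of_notMem hx]; exact zero_le
    have := hlub σ hσc hσub ω
    rw [hσ, Set.piecewise_eq_of_notMem _ _ _ hω] at this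
    exact this.trans (min_le_right _ _)
  have hB' : ∀ n (ω : K), ω ∉ W n → τ ω ≤ n := fun n ω hω =>
    hB n ω (fun h => hω (hWanti n h))
  -- τ = n on U n
  have hUeq : ∀ n (ω : K), ω ∈ U n → τ ω = n := by
    intro n ω hω
    refine le_antisymm ?_ (hubn n ω hω)
    set σ : K → ENNReal := (U n).piecewise (fun _ => (n : ENNReal)) τ with hσ
    have hσc : Continuous σ := Continuous.piecewise
      (by rw [(hU n).frontier_eq]; simp) continuous_const hτ
    have hσub : ∀ k (x : K), Set.indicator (U k) (fun _ => (k : ENNReal)) x ≤ σ x := by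
      intro k x
      by_cases hx : x ∈ U k
      · rw [Set.indicator_of_mem hx]
        by_cases hkn : k = n
        · subst hkn
          rw [hσ, Set.piecewise_eq_of_mem _ _ _ hx]
        · have hxn : x ∉ U n := fun hxn => Set.disjoint_left.mp (hdisj hkn) hx hxn
          rw [hσ, Set.piecewise_eq_of_notMem _ _ _ hxn]
          exact hubn k x hx
      · rw [Set.indicator_of_notMem hx]; exact zero_le
    have := hlub σ hσc hσub ω
    rwa [hσ, Set.piecewise_eq_of_mem _ _ _ hω] at this
  have hWsub : ∀ n, W n ⊆ U n ∪ W (n + 1) := by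
    intro n
    have hsub : (⋃ k, ⋃ (_ : n ≤ k), U k) ⊆ U n ∪ (⋃ k, ⋃ (_ : n + 1 ≤ k), U k) := by
      intro x hx
      simp only [mem_iUnion] at hx ⊢
      obtain ⟨k, hk, hxk⟩ := hx
      rcases eq_or_lt_of_le hk with h | h
      · exact Set.mem_union_left _ (h ▸ hxk)
      · exact Set.mem_union_right _ (by simp only [mem_iUnion]; exact ⟨k, h, hxk⟩)
    calc W n ⊆ closure (U n ∪ (⋃ k, ⋃ (_ : n + 1 ≤ k), U k)) := closure_mono hsub
      _ = closure (U n) ∪ W (n + 1) := closure_union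
      _ = U n ∪ W (n + 1) := by rw [(hU n).1.closure_eq]
  have hclosed : IsClosed {ω : K | τ ω = ⊤} := by
    have h : {ω : K | τ ω = ⊤} = τ ⁻¹' {⊤} := rfl
    rw [h]; exact isClosed_singleton.preimage hτ
  have htopW : ∀ (ω : K), τ ω = ⊤ → ∀ n, ω ∈ W n := by
    intro ω hω n
    by_contra h
    have h2 := hB' n ω h
    rw [hω] at h2
    exact ENNReal.natCast_ne_top n (top_le_iff.mp h2)
  refine ⟨?_, ?_, ?_⟩
  · -- nowhere dense
    show interior (closure {ω : K | τ ω = ⊤}) = ∅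
    rw [hclosed.closure_eq]
    by_contra h
    obtain ⟨x, hx⟩ := nonempty_iff_ne_empty.mpr h
    have hOopen : IsOpen (interior {ω : K | τ ω = ⊤}) := isOpen_interior
    have hxτ : x ∈ {ω : K | τ ω = ⊤} := interior_subset hx
    have h1 : x ∈ closure (⋃ k, ⋃ (_ : 1 ≤ k), U k) := htopW x hxτ 1
    obtain ⟨y, hyO, hyU⟩ := mem_closure_iff.mp h1 _ hOopen hx
    simp only [mem_iUnion] at hyU
    obtain ⟨k, hk1, hyk⟩ := hyU
    have hyτ : y ∈ {ω : K | τ ω = ⊤} := interior_subset hyO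
    have hy2 : y ∈ closure (⋃ j, ⋃ (_ : k + 1 ≤ j), U j) := htopW y hyτ (k + 1)
    obtain ⟨z, hzO, hzU⟩ := mem_closure_iff.mp hy2 _ (hOopen.inter (hU k).2) ⟨hyO, hyk⟩
    simp only [mem_iUnion] at hzU
    obtain ⟨j, hjk, hzj⟩ := hzU
    exact Set.disjoint_left.mp (hdisj (by omega : k ≠ j)) hzO.2 hzj
  · -- level sets
    intro n hn
    ext ω
    simp only [mem_setOf_eq]
    constructor
    · intro hω
      obtain ⟨m, rfl⟩ : ∃ m, n = m + 1 := ⟨n - 1, by omega⟩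
      have hωW : ω ∈ W (m + 1) := by
        by_contra h
        have h2 := hB m ω h
        rw [hω] at h2
        have : (m + 1 : ℕ) ≤ m := by exact_mod_cast h2
        omega
      rcases hWsub (m + 1) hωW with h | h
      · exact h
      · exfalso
        have h2 := hA (m + 2) ω h
        rw [hω] at h2
        have : (m + 2 : ℕ) ≤ m + 1 := by exact_mod_cast h2
        omega
    · intro hω
      exact hUeq n ω hω
  · -- range
    intro ω
    by_cases h : τ ω = ⊤
    · exact Or.inl h
    · right
      have hex : ∃ n, ω ∉ W n := by
        obtain ⟨n, hn⟩ := ENNReal.exists_nat_gt h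
        exact ⟨n, fun hw => absurd (hA n ω hw) (not_le.mpr hn)⟩
      have hmW : ω ∉ W (Nat.find hex) := Nat.find_spec hex
      cases hfind : Nat.find hex with
      | zero =>
        refine ⟨0, le_antisymm ?_ (by simp)⟩
        rw [hfind] at hmW
        simpa using hB' 0 ω hmW
      | succ m =>
        rw [hfind] at hmW
        have hmem : ω ∈ W m := not_not.mp (Nat.find_min hex (by omega))
        exact ⟨m, le_antisymm (hB m ω hmW) (hA m ω hmem)⟩
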